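/- Let V be a finite vertex set, G_A a graph on V, and β ∈ (0,1]. Let C_1, …, C_m ⊆ V together with nonnegative reals p_1, …, p_m summing to 1 be given, where each C_i is a vertex cover of G_A. For v ∈ V set c_v = ∑_{i : v ∈ C_i} p_i and w_v = 1 − (2 − β)·c_v. If X is a vertex cover of G_A that minimizes the total weight ∑_{v∈X} w_v among all vertex covers of G_A, then ∑_{v∈X} (1 − (2 − β)·c_v) ≤ (β/2)·∑_{v∈V} c_v. -/

import Mathlib

/-- `S` is a vertex cover of the graph `G`: every edge has an endpoint in `S`. -/
def IsVertexCover {V : Type*} (G : SimpleGraph V) (S : Finset V) : Prop :=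
  ∀ ⦃u v : V⦄, G.Adj u v → u ∈ S ∨ v ∈ S

open MeasureTheory Set

/-- Lemma 3.5 of the paper (vertex-cover-weight lemma), stated for a finitely
supported distribution `(C i, p i)` over vertex covers of `G_A`:
if `c v` is the probability that `v` lies in the random cover, weights are
`w v = 1 - (2-β)·c v`, and `X` is a minimum-weight vertex cover of `G_A`, then
`∑_{v∈X} (1 - (2-β) c_v) ≤ (β/2) ∑_{v∈V} c_v`. -/
theorem stmt_1 {V : Type*} [Fintype V] [DecidableEq V]
    (G_A : SimpleGraph V) (β : ℝ) (hβ : β ∈ Set.Ioc (0 : ℝ) 1)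
    (m : ℕ) (C : Fin m → Finset V) (p : Fin m → ℝ)
    (hp : ∀ i, 0 ≤ p i) (hpsum : ∑ i, p i = 1)
    (hC : ∀ i, IsVertexCover G_A (C i))
    (c : V → ℝ) (hc : ∀ v, c v = ∑ i, if v ∈ C i then p i else 0)
    (X : Finset V) (hX : IsVertexCover G_A X)
    (hXmin : ∀ Y : Finset V, IsVertexCover G_A Y →
      ∑ v ∈ X, (1 - (2 - β) * c v) ≤ ∑ v ∈ Y, (1 - (2 - β) * c v)) :
    ∑ v ∈ X, (1 - (2 - β) * c v) ≤ (β / 2) * ∑ v : V, c v := by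
  classical
  obtain ⟨hβ0, hβ1⟩ := hβ
  have h2β : (0:ℝ) < 2 - β := by linarith
  have hc0 : ∀ v, 0 ≤ c v := by
    intro v; rw [hc v]
    exact Finset.sum_nonneg fun i _ => by by_cases h : v ∈ C i <;> simp [h, hp i]
  have hc1 : ∀ v, c v ≤ 1 := by
    intro v; rw [hc v, ← hpsum]
    exact Finset.sum_le_sum fun i _ => by by_cases h : v ∈ C i <;> simp [h, hp i]
  have hedge : ∀ ⦃x y : V⦄, G_A.Adj x y → 1 ≤ c x + c y := by
    intro x y hxy
    rw [hc x, hc y, ← Finset.sum_add_distrib, ← hpsum]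
    refine Finset.sum_le_sum fun i _ => ?_
    rcases hC i hxy with h | h
    · by_cases h' : y ∈ C i <;> simp [h, h'] <;> linarith [hp i]
    · by_cases h' : x ∈ C i <;> simp [h, h'] <;> linarith [hp i]
  -- The threshold CDF
  set F : ℝ → ℝ := fun a => β / (2 * (1 - (2 - β) * min a (1/2))) with hF
  have hden : ∀ a : ℝ, β / 2 ≤ 1 - (2 - β) * min a (1/2) := by
    intro a
    have h1 : min a (1/2) ≤ 1/2 := min_le_right _ _
    nlinarith [mul_nonneg h2β.le (by linarith : (0:ℝ) ≤ 1/2 - min a (1/2))]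
  have hdenpos : ∀ a : ℝ, 0 < 1 - (2 - β) * min a (1/2) := fun a =>
    lt_of_lt_of_le (by linarith) (hden a)
  have hF0 : ∀ a, 0 ≤ F a := fun a =>
    div_nonneg (le_of_lt hβ0) (by linarith [hdenpos a])
  have hF1 : ∀ a, F a ≤ 1 := by
    intro a
    simp only [hF]
    rw [div_le_one (by linarith [hdenpos a])]
    linarith [hden a]
  have hFmono : Monotone F := by
    intro a b hab
    have h1 : min a (1/2) ≤ min b (1/2) := min_le_min hab le_rfl
    simp only [hF]
    rw [div_le_div_iff₀ (by linarith [hdenpos a]) (by linarith [hdenpos b])]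
    nlinarith [mul_nonneg (mul_nonneg hβ0.le h2β.le) (sub_nonneg.2 h1)]
  have hFhalf : ∀ a : ℝ, 1/2 ≤ a → F a = 1 := by
    intro a ha
    simp only [hF]
    rw [min_eq_right ha]
    have h1 : 2 * (1 - (2 - β) * (1/2 : ℝ)) = β := by ring
    rw [h1]
    exact div_self (ne_of_gt hβ0)
  have hFval : ∀ a : ℝ, a ≤ 1/2 → F a = β / (2 * (1 - (2 - β) * a)) := by
    intro a ha; simp only [hF]; rw [min_eq_left ha]
  -- the uniform measure on (0,1]
  set μ : Measure ℝ := volume.restrict (Ioc (0:ℝ) 1) with hμ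
  haveI hprob : IsProbabilityMeasure μ := by
    constructor
    rw [hμ, Measure.restrict_apply MeasurableSet.univ, Set.univ_inter, Real.volume_Ioc]
    norm_num
  -- the per-vertex membership sets
  set A : V → Fin m → Set ℝ := fun v i =>
    if v ∈ C i then Iic (F (c v)) ∪ Ioi (F (1 - c v)) else Ioi (F (1 - c v)) with hA
  have hAmeas : ∀ v i, MeasurableSet (A v i) := by
    intro v i; simp only [hA]
    split
    · exact measurableSet_Iic.union measurableSet_Ioi
    · exact measurableSet_Ioi
  have hrest : ∀ s : Set ℝ, MeasurableSet s → μ s = volume (s ∩ Ioc 0 1) := by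
    intro s hs; rw [hμ, Measure.restrict_apply hs]
  -- measure of the membership sets
  have hμval : ∀ v i, (μ (A v i)).toReal =
      if v ∈ C i then (if c v < 1/2 then F (c v) else 1)
      else (if c v < 1/2 then 0 else 1 - F (1 - c v)) := by
    intro v i
    by_cases hvi : v ∈ C i <;> by_cases hcv : c v < 1/2 <;>
      simp only [hA, hvi, hcv, if_true, if_false]
    · -- v ∈ C i, c v < 1/2 : value F (c v)
      rw [hFhalf (1 - c v) (by linarith)]
      rw [hrest _ (measurableSet_Iic.union measurableSet_Ioi)]
      have hset : (Iic (F (c v)) ∪ Ioi 1) ∩ Ioc 0 1 = Ioc 0 (F (c v)) := by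
        ext x
        simp only [mem_inter_iff, mem_union, mem_Iic, mem_Ioi, mem_Ioc]
        constructor
        · rintro ⟨h1 | h1, h2, h3⟩
          · exact ⟨h2, h1⟩
          · linarith
        · rintro ⟨h1, h2⟩
          exact ⟨Or.inl h2, h1, le_trans h2 (hF1 _)⟩
      rw [hset, Real.volume_Ioc, ENNReal.toReal_ofReal (by linarith [hF0 (c v)])]
      ring
    · -- v ∈ C i, c v ≥ 1/2 : value 1
      push_neg at hcv
      rw [hFhalf (c v) hcv]
      rw [hrest _ (measurableSet_Iic.union measurableSet_Ioi)]
      have hset : (Iic (1:ℝ) ∪ Ioi (F (1 - c v))) ∩ Ioc 0 1 = Ioc 0 1 := by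
        apply Set.inter_eq_right.mpr
        intro x hx; exact Or.inl hx.2
      rw [hset, Real.volume_Ioc]
      norm_num
    · -- v ∉ C i, c v < 1/2 : value 0
      rw [hFhalf (1 - c v) (by linarith)]
      rw [hrest _ measurableSet_Ioi]
      have hset : Ioi (1:ℝ) ∩ Ioc 0 1 = ∅ := by
        ext x
        simp only [mem_inter_iff, mem_Ioi, mem_Ioc, mem_empty_iff_false, iff_false, not_and]
        intro h1 h2
        linarith
      rw [hset]
      simp
    · -- v ∉ C i, c v ≥ 1/2 : value 1 - F (1 - c v)
      rw [hrest _ measurableSet_Ioi]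
      have hset : Ioi (F (1 - c v)) ∩ Ioc 0 1 = Ioc (F (1 - c v)) 1 := by
        ext x
        simp only [mem_inter_iff, mem_Ioi, mem_Ioc]
        constructor
        · rintro ⟨h1, _, h3⟩; exact ⟨h1, h3⟩
        · rintro ⟨h1, h2⟩; exact ⟨h1, lt_of_le_of_lt (hF0 _) h1, h2⟩
      rw [hset, Real.volume_Ioc, ENNReal.toReal_ofReal (by linarith [hF1 (1 - c v)])]
  -- key comparison: X against the cover determined by (i, u)
  have key : ∀ i, ∑ v ∈ X, (1 - (2 - β) * c v) ≤
      ∑ v : V, (1 - (2 - β) * c v) * (μ (A v i)).toReal := by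
    intro i
    have hint : ∀ v : V, Integrable ((A v i).indicator (fun _ => 1 - (2 - β) * c v)) μ :=
      fun v => (integrable_const _).indicator (hAmeas v i)
    have h2 : ∑ v ∈ X, (1 - (2 - β) * c v) ≤
        ∫ u, (∑ v : V, (A v i).indicator (fun _ => 1 - (2 - β) * c v) u) ∂μ := by
      have hconst : ∫ _ : ℝ, (∑ v ∈ X, (1 - (2 - β) * c v)) ∂μ
          = ∑ v ∈ X, (1 - (2 - β) * c v) := by
        simp [integral_const]
      rw [← hconst]
      refine integral_mono_ae (integrable_const _)
        (integrable_finset_sum _ fun v _ => hint v) ?_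
      have hmem : ∀ᵐ u ∂μ, u ∈ Ioc (0:ℝ) 1 := by
        rw [hμ]; exact ae_restrict_mem measurableSet_Ioc
      filter_upwards [hmem] with u hu
      set Z : Finset V := Finset.univ.filter (fun v => u ∈ A v i) with hZ
      have hor : ∀ (x y : V), x ∈ C i → G_A.Adj x y → u ∈ A x i ∨ u ∈ A y i := by
        intro x y hxC hadj
        by_cases hx : u ≤ F (c x)
        · left
          simp only [hA, if_pos hxC]
          exact Or.inl hx
        · right
          push_neg at hx
          have h1 : c x < 1/2 := by
            by_contra hcon
            push_neg at hcon
            rw [hFhalf _ hcon] at hx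
            exact absurd hu.2 (not_le.2 hx)
          have h2' : 1 - c y ≤ c x := by linarith [hedge hadj]
          have h3 : F (1 - c y) < u := lt_of_le_of_lt (hFmono h2') hx
          simp only [hA]
          split
          · exact Or.inr h3
          · exact h3
      have hZcover : IsVertexCover G_A Z := by
        intro x y hxy
        simp only [hZ, Finset.mem_filter, Finset.mem_univ, true_and]
        rcases hC i hxy with h | h
        · exact hor x y h hxy
        · exact (hor y x h hxy.symm).symm
      calc ∑ v ∈ X, (1 - (2 - β) * c v)
          ≤ ∑ v ∈ Z, (1 - (2 - β) * c v) := hXmin Z hZcover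
        _ = ∑ v : V, (A v i).indicator (fun _ => 1 - (2 - β) * c v) u := by
            rw [hZ, Finset.sum_filter]
            exact Finset.sum_congr rfl fun v _ => by rw [Set.indicator_apply]
    calc ∑ v ∈ X, (1 - (2 - β) * c v)
        ≤ ∫ u, (∑ v : V, (A v i).indicator (fun _ => 1 - (2 - β) * c v) u) ∂μ := h2
      _ = ∑ v : V, (1 - (2 - β) * c v) * (μ (A v i)).toReal := by
          rw [integral_finset_sum _ fun v _ => hint v]
          exact Finset.sum_congr rfl fun v _ => by
            rw [integral_indicator_const _ (hAmeas v i), smul_eq_mul, mul_comm]; rfl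
  -- combining over i with weights p i
  have hcompl : ∀ v, ∑ i, (if v ∈ C i then (0:ℝ) else p i) = 1 - c v := by
    intro v
    have h1 : ∀ i : Fin m, (if v ∈ C i then (0:ℝ) else p i)
        = p i - (if v ∈ C i then p i else 0) := by
      intro i; by_cases h : v ∈ C i <;> simp [h]
    rw [Finset.sum_congr rfl fun i _ => h1 i, Finset.sum_sub_distrib, hpsum, ← hc v]
  have hsum_i : ∀ v, ∑ i, p i * (μ (A v i)).toReal =
      c v * (if c v < 1/2 then F (c v) else 1)
      + (1 - c v) * (if c v < 1/2 then 0 else 1 - F (1 - c v)) := by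
    intro v
    have h1 : ∀ i, p i * (μ (A v i)).toReal =
        (if v ∈ C i then p i else 0) * (if c v < 1/2 then F (c v) else 1)
        + (if v ∈ C i then (0:ℝ) else p i) * (if c v < 1/2 then 0 else 1 - F (1 - c v)) := by
      intro i
      rw [hμval v i]
      by_cases h : v ∈ C i <;> simp [h]
    rw [Finset.sum_congr rfl fun i _ => h1 i, Finset.sum_add_distrib,
      ← Finset.sum_mul, ← Finset.sum_mul, ← hc v, hcompl v]
  -- the per-vertex inequality
  have hρ : ∀ v, (1 - (2 - β) * c v) *
      (c v * (if c v < 1/2 then F (c v) else 1)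
        + (1 - c v) * (if c v < 1/2 then 0 else 1 - F (1 - c v)))
      ≤ β / 2 * c v := by
    intro v
    have h0 : 0 ≤ c v := hc0 v
    have h1 : c v ≤ 1 := hc1 v
    by_cases hcv : c v < 1/2
    · rw [if_pos hcv, if_pos hcv, hFval (c v) (le_of_lt hcv)]
      have hd : 0 < 1 - (2 - β) * c v := by nlinarith
      have hd' : (1 - (2 - β) * c v) ≠ 0 := ne_of_gt hd
      refine le_of_eq ?_
      field_simp
      ring
    · rw [if_neg hcv, if_neg hcv]
      push_neg at hcv
      rw [hFval (1 - c v) (by linarith)]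
      set a := c v with ha
      have hd : 0 < 1 - (2 - β) * (1 - a) := by nlinarith
      have key2 : (1 - (2 - β) * a) *
          (a * (2 * (1 - (2 - β) * (1 - a))) + (1 - a) * (2 * (1 - (2 - β) * (1 - a)) - β))
          ≤ (β / 2 * a) * (2 * (1 - (2 - β) * (1 - a))) := by
        nlinarith [sq_nonneg (2 * (1 - (2 - β) * (1 - a)) - β), h2β, hd,
          mul_pos h2β hd]
      have hrw : a * 1 + (1 - a) * (1 - β / (2 * (1 - (2 - β) * (1 - a)))) =
          (a * (2 * (1 - (2 - β) * (1 - a))) + (1 - a) * (2 * (1 - (2 - β) * (1 - a)) - β))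
            / (2 * (1 - (2 - β) * (1 - a))) := by
        have hD : (2 * (1 - (2 - β) * (1 - a))) ≠ 0 := ne_of_gt (by linarith)
        rw [eq_div_iff hD, add_mul, mul_assoc (1 - a),
          sub_mul (1:ℝ) (β / (2 * (1 - (2 - β) * (1 - a)))), div_mul_cancel₀ β hD]
        ring
      rw [hrw, ← mul_div_assoc, div_le_iff₀ (by linarith)]
      linarith [key2]
  -- put everything together
  calc ∑ v ∈ X, (1 - (2 - β) * c v)
      = ∑ i, p i * ∑ v ∈ X, (1 - (2 - β) * c v) := by
        rw [← Finset.sum_mul, hpsum, one_mul]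
    _ ≤ ∑ i, p i * ∑ v : V, (1 - (2 - β) * c v) * (μ (A v i)).toReal :=
        Finset.sum_le_sum fun i _ => mul_le_mul_of_nonneg_left (key i) (hp i)
    _ = ∑ v : V, (1 - (2 - β) * c v) * ∑ i, p i * (μ (A v i)).toReal := by
        simp_rw [Finset.mul_sum]
        rw [Finset.sum_comm]
        exact Finset.sum_congr rfl fun v _ =>
          Finset.sum_congr rfl fun i _ => by ring
    _ ≤ ∑ v : V, β / 2 * c v :=
        Finset.sum_le_sum fun v _ => by rw [hsum_i v]; exact hρ v
    _ = β / 2 * ∑ v : V, c v := by rw [Finset.mul_sum]
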